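/- If T is a convex-cyclic bounded linear operator on a complex Banach space, then every eigenvalue λ of the adjoint T* satisfies |λ| > 1 and Im(λ) ≠ 0. -/

import Mathlib

/-- If `T` is a convex-cyclic bounded linear operator on a complex Banach space, then every
eigenvalue `λ` of the adjoint `T*` (i.e. `f ∘ T = λ f` for some nonzero continuous linear
functional `f`) satisfies `|λ| > 1` and `Im λ ≠ 0`. -/
theorem eigenvalue_adjoint_of_convexCyclic
    {X : Type*} [NormedAddCommGroup X] [NormedSpace ℂ X] [CompleteSpace X]
    (T : X →L[ℂ] X)
    (hT : ∃ x : X, Dense (convexHull ℝ (Set.range fun n : ℕ => (T ^ n) x)))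
    (lam : ℂ) (f : X →L[ℂ] ℂ) (hf : f ≠ 0) (heig : f.comp T = lam • f) :
    1 < ‖lam‖ ∧ lam.im ≠ 0 := by
  obtain ⟨x, hx⟩ := hT
  -- f is surjective
  have hsurj : Function.Surjective f := by
    obtain ⟨x0, hx0⟩ : ∃ x0, f x0 ≠ 0 := by
      by_contra h
      push_neg at h
      exact hf (ContinuousLinearMap.ext fun y => by simpa using h y)
    intro z
    exact ⟨(z / f x0) • x0, by rw [f.map_smul, smul_eq_mul, div_mul_cancel₀ z hx0]⟩
  set c : ℂ := f x with hc
  have hfn : ∀ n : ℕ, f ((T ^ n) x) = lam ^ n * c := by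
    intro n
    induction n with
    | zero => simp [hc]
    | succ n ih =>
      have h1 : f (T ((T ^ n) x)) = lam * f ((T ^ n) x) := by
        have := congrFun (congrArg DFunLike.coe heig) ((T ^ n) x)
        simpa using this
      have h2 : (T ^ (n + 1)) x = T ((T ^ n) x) := by
        rw [pow_succ']; rfl
      rw [h2, h1, ih, pow_succ]; ring
  -- the image of the dense convex hull under f
  have himg : Dense (f '' (convexHull ℝ (Set.range fun n : ℕ => (T ^ n) x))) :=
    hsurj.denseRange.dense_image f.continuous hx
  have hlin : f '' (convexHull ℝ (Set.range fun n : ℕ => (T ^ n) x))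
      = convexHull ℝ (f '' Set.range fun n : ℕ => (T ^ n) x) :=
    ((f.toLinearMap.restrictScalars ℝ).image_convexHull _)
  have hrange : (f '' Set.range fun n : ℕ => (T ^ n) x)
      = Set.range fun n : ℕ => lam ^ n * c := by
    rw [← Set.range_comp]
    exact congrArg Set.range (funext fun n => hfn n)
  have hdense : Dense (convexHull ℝ (Set.range fun n : ℕ => lam ^ n * c)) := by
    rw [hlin, hrange] at himg
    exact himg
  -- c ≠ 0
  have hcne : c ≠ 0 := by
    intro h0
    have hsub : (Set.range fun n : ℕ => lam ^ n * c) ⊆ Metric.closedBall (0 : ℂ) 0 := by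
      rintro - ⟨n, rfl⟩
      simp [h0]
    have := convexHull_min hsub (convex_closedBall _ _)
    have h1 : (1 : ℂ) ∈ closure (convexHull ℝ (Set.range fun n : ℕ => lam ^ n * c)) :=
      hdense 1
    have h2 := (Metric.isClosed_closedBall.closure_subset_iff.mpr this) h1
    simp at h2
  constructor
  · by_contra hle
    push_neg at hle
    have hsub : (Set.range fun n : ℕ => lam ^ n * c) ⊆
        Metric.closedBall (0 : ℂ) ‖c‖ := by
      rintro - ⟨n, rfl⟩
      simp only [Metric.mem_closedBall, dist_zero_right, norm_mul, norm_pow]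
      calc ‖lam‖ ^ n * ‖c‖ ≤ 1 ^ n * ‖c‖ := by
            gcongr
        _ = ‖c‖ := by ring
    have hsub2 := convexHull_min hsub (convex_closedBall _ _)
    have h1 : ((‖c‖ + 1 : ℝ) : ℂ) ∈
        closure (convexHull ℝ (Set.range fun n : ℕ => lam ^ n * c)) :=
      hdense _
    have h2 := (Metric.isClosed_closedBall.closure_subset_iff.mpr hsub2) h1
    simp only [Metric.mem_closedBall, dist_zero_right, Complex.norm_real,
      Real.norm_eq_abs] at h2
    have : (0:ℝ) ≤ ‖c‖ := norm_nonneg _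
    rw [abs_of_nonneg (by linarith)] at h2
    linarith
  · intro him
    -- lam is real, so the orbit lies in the real span of c
    have hsub : (Set.range fun n : ℕ => lam ^ n * c) ⊆
        (Submodule.span ℝ ({c} : Set ℂ) : Set ℂ) := by
      rintro - ⟨n, rfl⟩
      show lam ^ n * c ∈ (Submodule.span ℝ ({c} : Set ℂ) : Set ℂ)
      have : lam ^ n * c = (lam.re ^ n : ℝ) • c := by
        have hl : lam = (lam.re : ℂ) := by
          apply Complex.ext <;> simp [him]
        rw [hl]
        simp [Complex.real_smul]
      rw [this]
      exact Submodule.smul_mem _ _ (Submodule.mem_span_singleton_self c)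
    have hconv : Convex ℝ (Submodule.span ℝ ({c} : Set ℂ) : Set ℂ) :=
      (Submodule.span ℝ ({c} : Set ℂ)).convex
    have hsub2 := convexHull_min hsub hconv
    have hclosed : IsClosed (Submodule.span ℝ ({c} : Set ℂ) : Set ℂ) :=
      (Submodule.span ℝ ({c} : Set ℂ)).closed_of_finiteDimensional
    have hmem : Complex.I * c ∈ Submodule.span ℝ ({c} : Set ℂ) :=
      (hclosed.closure_subset_iff.mpr hsub2) (hdense _)
    obtain ⟨t, ht⟩ := Submodule.mem_span_singleton.mp hmem
    have : (t : ℂ) * c = Complex.I * c := by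
      rw [← ht, Complex.real_smul]
    have h3 : (t : ℂ) = Complex.I := mul_right_cancel₀ hcne this
    have := congrArg Complex.im h3
    simp at this
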